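/- Let F be a field of characteristic zero and B an 8-dimensional F-vector space with basis e1, e2, e3, e4, f1, f2, f3, f4. For a, b, c ∈ B write a∧b∧c for the alternating tensor Σ_{σ ∈ S3} sgn(σ) w_{σ(1)} ⊗ w_{σ(2)} ⊗ w_{σ(3)} in B⊗B⊗B, where (w1,w2,w3) = (a,b,c). Define the linear map Δ : B → B⊗B⊗B on the basis by Δ(f1) = f2∧f4∧f3, Δ(e2) = e1∧f3∧f4, Δ(e3) = e1∧f4∧f2, Δ(e4) = e1∧f2∧f3, and Δ(e1) = Δ(f2) = Δ(f3) = Δ(f4) = 0. Then the trilinear operation on the dual space B* defined by ⟨{α,β,γ}, v⟩ = (α⊗β⊗γ)(Δ(v)) for all v ∈ B is alternating and satisfies the Filippov identity, i.e. (B*, {·,·,·}) is a 3-Lie algebra. -/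

import Mathlib

open scoped TensorProduct

theorem stmt17
    (F B : Type*) [Field F] [CharZero F] [AddCommGroup B] [Module F B]
    (b : Module.Basis (Fin 8) F B)
    (Δ : B →ₗ[F] TensorProduct F B (TensorProduct F B B))
    (w : B → B → B → TensorProduct F B (TensorProduct F B B))
    (hw : ∀ x y z : B, w x y z =
      x ⊗ₜ[F] (y ⊗ₜ[F] z) - x ⊗ₜ[F] (z ⊗ₜ[F] y) - y ⊗ₜ[F] (x ⊗ₜ[F] z)
        + y ⊗ₜ[F] (z ⊗ₜ[F] x) + z ⊗ₜ[F] (x ⊗ₜ[F] y) - z ⊗ₜ[F] (y ⊗ₜ[F] x))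
    (hΔ1 : Δ (b 4) = w (b 5) (b 7) (b 6))
    (hΔ2 : Δ (b 1) = w (b 0) (b 6) (b 7))
    (hΔ3 : Δ (b 2) = w (b 0) (b 7) (b 5))
    (hΔ4 : Δ (b 3) = w (b 0) (b 5) (b 6))
    (hΔ0 : Δ (b 0) = 0 ∧ Δ (b 5) = 0 ∧ Δ (b 6) = 0 ∧ Δ (b 7) = 0)
    (brD : Module.Dual F B → Module.Dual F B → Module.Dual F B → Module.Dual F B)
    (hbrD : ∀ (α β γ : Module.Dual F B) (v : B),
      brD α β γ v =
        TensorProduct.dualDistrib F B (TensorProduct F B B)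
          (α ⊗ₜ[F] TensorProduct.dualDistrib F B B (β ⊗ₜ[F] γ)) (Δ v))
    :
    (∀ α γ : Module.Dual F B, brD α α γ = 0) ∧
    (∀ α β : Module.Dual F B, brD α β β = 0) ∧
    (∀ α β : Module.Dual F B, brD α β α = 0) ∧
    (∀ a1 a2 a3 a4 a5 : Module.Dual F B,
      brD a1 a2 (brD a3 a4 a5) =
        brD (brD a1 a2 a3) a4 a5 + brD a3 (brD a1 a2 a4) a5 + brD a3 a4 (brD a1 a2 a5)) := by
  obtain ⟨h0, h5, h6, h7⟩ := hΔ0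
  have hev : ∀ (α β γ : Module.Dual F B) (x y z : B),
      TensorProduct.dualDistrib F B (TensorProduct F B B)
        (α ⊗ₜ[F] TensorProduct.dualDistrib F B B (β ⊗ₜ[F] γ)) (w x y z) =
      α x * (β y * γ z) - α x * (β z * γ y) - α y * (β x * γ z)
        + α y * (β z * γ x) + α z * (β x * γ y) - α z * (β y * γ x) := by
    intro α β γ x y z
    rw [hw]
    simp [TensorProduct.dualDistrib_apply, map_sub, map_add]
  have z0 : ∀ (α β γ : Module.Dual F B), brD α β γ (b 0) = 0 := by
    intro α β γ; rw [hbrD, h0, map_zero]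
  have z5 : ∀ (α β γ : Module.Dual F B), brD α β γ (b 5) = 0 := by
    intro α β γ; rw [hbrD, h5, map_zero]
  have z6 : ∀ (α β γ : Module.Dual F B), brD α β γ (b 6) = 0 := by
    intro α β γ; rw [hbrD, h6, map_zero]
  have z7 : ∀ (α β γ : Module.Dual F B), brD α β γ (b 7) = 0 := by
    intro α β γ; rw [hbrD, h7, map_zero]
  have e1 : ∀ (α β γ : Module.Dual F B), brD α β γ (b 1) =
      α (b 0) * (β (b 6) * γ (b 7)) - α (b 0) * (β (b 7) * γ (b 6))
        - α (b 6) * (β (b 0) * γ (b 7)) + α (b 6) * (β (b 7) * γ (b 0))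
        + α (b 7) * (β (b 0) * γ (b 6)) - α (b 7) * (β (b 6) * γ (b 0)) := by
    intro α β γ; rw [hbrD, hΔ2, hev]
  have e2 : ∀ (α β γ : Module.Dual F B), brD α β γ (b 2) =
      α (b 0) * (β (b 7) * γ (b 5)) - α (b 0) * (β (b 5) * γ (b 7))
        - α (b 7) * (β (b 0) * γ (b 5)) + α (b 7) * (β (b 5) * γ (b 0))
        + α (b 5) * (β (b 0) * γ (b 7)) - α (b 5) * (β (b 7) * γ (b 0)) := by
    intro α β γ; rw [hbrD, hΔ3, hev]
  have e3 : ∀ (α β γ : Module.Dual F B), brD α β γ (b 3) =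
      α (b 0) * (β (b 5) * γ (b 6)) - α (b 0) * (β (b 6) * γ (b 5))
        - α (b 5) * (β (b 0) * γ (b 6)) + α (b 5) * (β (b 6) * γ (b 0))
        + α (b 6) * (β (b 0) * γ (b 5)) - α (b 6) * (β (b 5) * γ (b 0)) := by
    intro α β γ; rw [hbrD, hΔ4, hev]
  have e4 : ∀ (α β γ : Module.Dual F B), brD α β γ (b 4) =
      α (b 5) * (β (b 7) * γ (b 6)) - α (b 5) * (β (b 6) * γ (b 7))
        - α (b 7) * (β (b 5) * γ (b 6)) + α (b 7) * (β (b 6) * γ (b 5))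
        + α (b 6) * (β (b 5) * γ (b 7)) - α (b 6) * (β (b 7) * γ (b 5)) := by
    intro α β γ; rw [hbrD, hΔ1, hev]
  have halt1 : ∀ α γ : Module.Dual F B, brD α α γ = 0 := by
    intro α γ
    refine b.ext fun i => ?_
    fin_cases i <;>
      first
      | exact z0 _ _ _
      | exact z5 _ _ _
      | exact z6 _ _ _
      | exact z7 _ _ _
      | exact (e1 _ _ _).trans (by simp only [LinearMap.zero_apply]; ring)
      | exact (e2 _ _ _).trans (by simp only [LinearMap.zero_apply]; ring)
      | exact (e3 _ _ _).trans (by simp only [LinearMap.zero_apply]; ring)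
      | exact (e4 _ _ _).trans (by simp only [LinearMap.zero_apply]; ring)
  have halt2 : ∀ α β : Module.Dual F B, brD α β β = 0 := by
    intro α β
    refine b.ext fun i => ?_
    fin_cases i <;>
      first
      | exact z0 _ _ _
      | exact z5 _ _ _
      | exact z6 _ _ _
      | exact z7 _ _ _
      | exact (e1 _ _ _).trans (by simp only [LinearMap.zero_apply]; ring)
      | exact (e2 _ _ _).trans (by simp only [LinearMap.zero_apply]; ring)
      | exact (e3 _ _ _).trans (by simp only [LinearMap.zero_apply]; ring)
      | exact (e4 _ _ _).trans (by simp only [LinearMap.zero_apply]; ring)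
  have halt3 : ∀ α β : Module.Dual F B, brD α β α = 0 := by
    intro α β
    refine b.ext fun i => ?_
    fin_cases i <;>
      first
      | exact z0 _ _ _
      | exact z5 _ _ _
      | exact z6 _ _ _
      | exact z7 _ _ _
      | exact (e1 _ _ _).trans (by simp only [LinearMap.zero_apply]; ring)
      | exact (e2 _ _ _).trans (by simp only [LinearMap.zero_apply]; ring)
      | exact (e3 _ _ _).trans (by simp only [LinearMap.zero_apply]; ring)
      | exact (e4 _ _ _).trans (by simp only [LinearMap.zero_apply]; ring)
  have hvan : ∀ (α β δ : Module.Dual F B), δ (b 0) = 0 → δ (b 5) = 0 →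
      δ (b 6) = 0 → δ (b 7) = 0 →
      brD α β δ = 0 ∧ brD α δ β = 0 ∧ brD δ α β = 0 := by
    intro α β δ d0 d5 d6 d7
    refine ⟨b.ext fun i => ?_, b.ext fun i => ?_, b.ext fun i => ?_⟩ <;>
      fin_cases i <;>
        first
        | exact z0 _ _ _
        | exact z5 _ _ _
        | exact z6 _ _ _
        | exact z7 _ _ _
        | exact (e1 _ _ _).trans
            (by simp only [LinearMap.zero_apply, d0, d5, d6, d7, mul_zero, zero_mul]; ring)
        | exact (e2 _ _ _).trans
            (by simp only [LinearMap.zero_apply, d0, d5, d6, d7, mul_zero, zero_mul]; ring)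
        | exact (e3 _ _ _).trans
            (by simp only [LinearMap.zero_apply, d0, d5, d6, d7, mul_zero, zero_mul]; ring)
        | exact (e4 _ _ _).trans
            (by simp only [LinearMap.zero_apply, d0, d5, d6, d7, mul_zero, zero_mul]; ring)
  refine ⟨halt1, halt2, halt3, fun a1 a2 a3 a4 a5 => ?_⟩
  rw [(hvan a1 a2 (brD a3 a4 a5) (z0 _ _ _) (z5 _ _ _) (z6 _ _ _) (z7 _ _ _)).1,
    (hvan a4 a5 (brD a1 a2 a3) (z0 _ _ _) (z5 _ _ _) (z6 _ _ _) (z7 _ _ _)).2.2,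
    (hvan a3 a5 (brD a1 a2 a4) (z0 _ _ _) (z5 _ _ _) (z6 _ _ _) (z7 _ _ _)).2.1,
    (hvan a3 a4 (brD a1 a2 a5) (z0 _ _ _) (z5 _ _ _) (z6 _ _ _) (z7 _ _ _)).1]
  simp
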